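/- Let C be a closed convex cone in a finite-dimensional real inner product space E whose linear span is all of E. Then a point x ∈ E lies in the topological interior of C if and only if ⟨x, v⟩ > 0 for every nonzero v in the dual cone C^∨. -/

import Mathlib

open scoped RealInnerProductSpace

/-- For a nonempty closed convex cone `C` with full linear span in a
finite-dimensional real inner product space, a point `x` lies in the interior
of `C` iff `⟪x, v⟫ > 0` for every nonzero `v` in the dual cone `C^∨`. -/
theorem mem_interior_iff_inner_pos_on_dualCone (E : Type*) [NormedAddCommGroup E]
    [InnerProductSpace ℝ E] [FiniteDimensional ℝ E]
    (C : ConvexCone ℝ E) (hne : (C : Set E).Nonempty) (hcl : IsClosed (C : Set E))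
    (hspan : Submodule.span ℝ (C : Set E) = ⊤) (x : E) :
    x ∈ interior (C : Set E) ↔
      ∀ v ∈ ProperCone.innerDual (C : Set E), v ≠ 0 → 0 < ⟪x, v⟫ := by
  -- 0 ∈ C
  obtain ⟨y, hy⟩ := hne
  have h0 : (0 : E) ∈ (C : Set E) := by
    have ht : Filter.Tendsto (fun t : ℝ => t • y) (nhdsWithin 0 (Set.Ioi 0)) (nhds 0) := by
      have : Filter.Tendsto (fun t : ℝ => t • y) (nhds 0) (nhds ((0 : ℝ) • y)) :=
        (continuous_id.smul continuous_const).tendsto 0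
      simpa using this.mono_left nhdsWithin_le_nhds
    refine hcl.mem_of_tendsto ht ?_
    filter_upwards [self_mem_nhdsWithin] with t (htpos : t ∈ Set.Ioi (0:ℝ))
    exact C.smul_mem htpos hy
  constructor
  · rintro hx v hv hv0
    obtain ⟨ε, hε, hball⟩ := Metric.isOpen_iff.1 isOpen_interior x hx
    have hvn : (0:ℝ) < ‖v‖ := norm_pos_iff.2 hv0
    set t : ℝ := ε / (2 * ‖v‖) with ht
    have htpos : 0 < t := div_pos hε (by positivity)
    have hmem : x - t • v ∈ (C : Set E) := by
      apply interior_subset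
      apply hball
      rw [Metric.mem_ball, dist_eq_norm]
      have : x - t • v - x = -(t • v) := by abel
      rw [this, norm_neg, norm_smul, Real.norm_eq_abs, abs_of_pos htpos, ht]
      rw [div_mul_eq_mul_div, div_lt_iff₀ (by positivity)]
      nlinarith
    have h1 : 0 ≤ ⟪x - t • v, v⟫ := ProperCone.mem_innerDual.1 hv hmem
    rw [inner_sub_left, real_inner_smul_left, real_inner_self_eq_norm_sq] at h1
    nlinarith [mul_pos htpos (pow_pos hvn 2)]
  · intro h
    by_contra hx
    -- interior of C is nonempty
    have hconv : Convex ℝ (C : Set E) := C.convex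
    have haff : affineSpan ℝ (C : Set E) = ⊤ := by
      rw [AffineSubspace.affineSpan_eq_top_iff_vectorSpan_eq_top_of_nonempty ℝ E E ⟨0, h0⟩]
      rw [vectorSpan_def]
      rw [eq_top_iff, ← hspan]
      apply Submodule.span_mono
      intro z hz
      exact ⟨z, hz, 0, h0, by simp⟩
    have hint : (interior (C : Set E)).Nonempty :=
      hconv.interior_nonempty_iff_affineSpan_eq_top.2 haff
    obtain ⟨a₀, ha₀⟩ := hint
    -- separate x from interior C
    obtain ⟨f, hf⟩ := geometric_hahn_banach_open_point
      (hconv.interior) isOpen_interior hx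
    -- f a ≤ f x for all a ∈ C
    have hle : ∀ a ∈ (C : Set E), f a ≤ f x := by
      intro a ha
      have ht : Filter.Tendsto (fun t : ℝ => f ((1 - t) • a + t • a₀))
          (nhdsWithin 0 (Set.Ioi 0)) (nhds (f a)) := by
        have : Filter.Tendsto (fun t : ℝ => f ((1 - t) • a + t • a₀)) (nhds 0)
            (nhds (f ((1 - (0:ℝ)) • a + (0:ℝ) • a₀))) := by
          apply (f.continuous.comp (by continuity)).tendsto
        simpa using this.mono_left nhdsWithin_le_nhds
      refine le_of_tendsto ht ?_
      filter_upwards [Ioo_mem_nhdsGT_of_mem (by norm_num : (0:ℝ) ∈ Set.Ico 0 1)]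
        with t htI
      have : (1 - t) • a + t • a₀ ∈ interior (C : Set E) := by
        apply hconv.combo_closure_interior_mem_interior
          (subset_closure ha) ha₀
          (by linarith [htI.2]) htI.1 (by ring)
      exact (hf _ this).le
    -- f ≤ 0 on C since C is a cone
    have hfle0 : ∀ a ∈ (C : Set E), f a ≤ 0 := by
      intro a ha
      by_contra hfa
      push_neg at hfa
      obtain ⟨n, hn⟩ := exists_nat_gt (f x / f a)
      have hna : (n + 1 : ℝ) • a ∈ (C : Set E) := C.smul_mem (by positivity) ha
      have := hle _ hna
      rw [map_smul, smul_eq_mul] at this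
      rw [div_lt_iff₀ hfa] at hn
      nlinarith
    have hfx0 : 0 ≤ f x := by simpa using hle 0 h0
    -- Riesz representation
    set v : E := -((InnerProductSpace.toDual ℝ E).symm f) with hv
    have hinner : ∀ z : E, ⟪z, v⟫ = -f z := by
      intro z
      rw [hv, inner_neg_right, real_inner_comm, InnerProductSpace.toDual_symm_apply]
    have hvmem : v ∈ ProperCone.innerDual ((C : Set E)) := by
      rw [ProperCone.mem_innerDual]
      intro a ha
      rw [hinner]
      linarith [hfle0 a ha]
    have hvne : v ≠ 0 := by
      intro hv0
      have hfa0 : f a₀ = 0 := by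
        have := hinner a₀
        rw [hv0, inner_zero_right] at this
        linarith
      have hfx : f x = 0 := by
        have := hinner x
        rw [hv0, inner_zero_right] at this
        linarith
      have := hf a₀ ha₀
      rw [hfa0, hfx] at this
      exact lt_irrefl _ this
    have := h v hvmem hvne
    rw [hinner] at this
    linarith
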